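/- arXiv:1608.00120 — 2 statements merged into one kernel-verified Lean document; each statement's English description precedes it below -/
import Mathlib

section
/- Let γ(s), γ(s+1), …, γ(t−1) be independent nonnegative random variables, let η > 0, θ ≥ 0 and δ > 0, and let S(s,t) = η·Σ_{k=s}^{t−1} ln(1+γ(k)) denote the cumulative service process. Then E[e^{−θ·S(s,t)}] = Π_{k=s}^{t−1} E[(1+γ(k))^{−ηθ}] ≤ Π_{k=s}^{t−1} U_{δ,γ(k)}(ηθ), where for a nonnegative random variable X with cumulative distribution function F_X the quantity U_{δ,X}(θ') = inf over natural numbers N of { (1+δN)^{−θ'} + Σ_{k=1}^{N} a_{θ',δ}(k)·F_X(kδ) } with a_{θ',δ}(k) = (1+(k−1)δ)^{−θ'} − (1+kδ)^{−θ'}. -/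
open MeasureTheory ProbabilityTheory Finset

/-- The upper bound `U_{δ,X}(θ')` of Lemma 1 of the paper, expressed in terms of the
c.d.f. `F` of the random variable: the infimum over the number of discretization
steps `N : ℕ` of `(1+δN)^{-θ'} + ∑_{k=1}^{N} a_{θ',δ}(k) · F(kδ)`, where
`a_{θ',δ}(k) = (1+(k-1)δ)^{-θ'} - (1+kδ)^{-θ'}`. -/
noncomputable def Ubound (F : ℝ → ℝ) (δ θ' : ℝ) : ℝ :=
  ⨅ N : ℕ,
    ((1 + δ * N) ^ (-θ') +
      ∑ k ∈ Icc 1 N,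
        ((1 + ((k : ℝ) - 1) * δ) ^ (-θ') - (1 + (k : ℝ) * δ) ^ (-θ')) * F ((k : ℝ) * δ))

lemma integral_rpow_le_Ubound {Ω : Type*} [MeasureSpace Ω]
    [IsProbabilityMeasure (ℙ : Measure Ω)]
    (X : Ω → ℝ) (hX : Measurable X) (hX0 : ∀ ω, 0 ≤ X ω)
    (θ' δ : ℝ) (hθ' : 0 ≤ θ') (hδ : 0 < δ) :
    ∫ ω, (1 + X ω) ^ (-θ') ∂ℙ ≤ Ubound (fun x => (ℙ {ω | X ω ≤ x}).toReal) δ θ' := by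
  apply le_ciInf
  intro N
  set b : ℝ → ℝ := fun u => (1 + u * δ) ^ (-θ') with hb
  have hbmono : ∀ {u v : ℝ}, 0 ≤ u → u ≤ v → b v ≤ b u := by
    intro u v hu huv
    apply Real.rpow_le_rpow_of_nonpos (by nlinarith) (by nlinarith) (by linarith)
  have hf_le_b : ∀ (x u : ℝ), 0 ≤ u → u * δ ≤ x → (1 + x) ^ (-θ') ≤ b u := by
    intro x u hu hux
    apply Real.rpow_le_rpow_of_nonpos (by nlinarith) (by linarith) (by linarith)
  set A : ℕ → Set Ω := fun k => {ω | X ω ≤ (k : ℝ) * δ} with hA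
  have hAmeas : ∀ k, MeasurableSet (A k) := fun k => hX measurableSet_Iic
  set g : Ω → ℝ := fun ω =>
      b N + ∑ k ∈ Icc 1 N, Set.indicator (A k) (fun _ => b ((k : ℝ) - 1) - b k) ω with hg
  have hle : ∀ ω, (1 + X ω) ^ (-θ') ≤ g ω := by
    intro ω
    set x := X ω with hx
    have hx0 : 0 ≤ x := hX0 ω
    set f := (1 + x) ^ (-θ') with hf
    set m : ℕ → ℝ := fun j => min f (b j) with hm
    have hf1 : f ≤ 1 := Real.rpow_le_one_of_one_le_of_nonpos (by linarith) (by linarith)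
    have hm0 : m 0 = f := by
      have : b 0 = 1 := by
        simp only [hb, Nat.cast_zero, zero_mul, add_zero]
        exact Real.one_rpow _
      simp [hm, this, hf1]
    have key : ∀ i : ℕ, m i - m (i + 1) ≤
        Set.indicator (A (i + 1)) (fun _ => b (((i + 1 : ℕ) : ℝ) - 1) - b ((i + 1 : ℕ) : ℝ)) ω := by
      intro i
      have hcast : (((i + 1 : ℕ) : ℝ) - 1) = (i : ℝ) := by push_cast; ring
      have hbi : b ((i + 1 : ℕ) : ℝ) ≤ b (i : ℝ) := by
        apply hbmono (Nat.cast_nonneg i)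
        push_cast; linarith
      by_cases hmem : ω ∈ A (i + 1)
      · rw [Set.indicator_of_mem hmem, hcast]
        rcases le_total f (b ((i + 1 : ℕ) : ℝ)) with h | h
        · have h1 : m (i + 1) = f := min_eq_left h
          have h2 : m i = f := min_eq_left (le_trans h (by exact_mod_cast hbi))
          rw [h1, h2]
          simp only [sub_self]
          linarith [hbi]
        · have h1 : m (i + 1) = b ((i + 1 : ℕ) : ℝ) := min_eq_right h
          have h2 : m i ≤ b (i : ℝ) := min_le_right _ _
          rw [h1]
          push_cast at h2 hbi ⊢
          linarith
      · rw [Set.indicator_of_notMem hmem]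
        have hxgt : ((i + 1 : ℕ) : ℝ) * δ ≤ x := by
          simp only [hA, Set.mem_setOf_eq, not_le] at hmem
          exact le_of_lt hmem
        have hfb : f ≤ b ((i + 1 : ℕ) : ℝ) :=
          hf_le_b x _ (Nat.cast_nonneg _) hxgt
        have h1 : m (i + 1) = f := min_eq_left hfb
        have h2 : m i = f := min_eq_left (le_trans hfb hbi)
        rw [h1, h2, sub_self]
    have htel : ∑ i ∈ range N, (m i - m (i + 1)) = m 0 - m N :=
      Finset.sum_range_sub' m N
    have hsum : ∑ k ∈ Icc 1 N, Set.indicator (A k) (fun _ => b ((k : ℝ) - 1) - b k) ω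
        = ∑ i ∈ range N, Set.indicator (A (1 + i))
            (fun _ => b (((1 + i : ℕ) : ℝ) - 1) - b ((1 + i : ℕ) : ℝ)) ω := by
      rw [← Finset.Ico_add_one_right_eq_Icc, Finset.sum_Ico_eq_sum_range]
      simp
    have hstep : ∑ i ∈ range N, (m i - m (i + 1)) ≤
        ∑ k ∈ Icc 1 N, Set.indicator (A k) (fun _ => b ((k : ℝ) - 1) - b k) ω := by
      rw [hsum]
      apply Finset.sum_le_sum
      intro i _
      have := key i
      simpa [add_comm 1 i] using this
    have hmN : m N ≤ b (N : ℝ) := min_le_right _ _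
    have : f - b (N : ℝ) ≤ m 0 - m N := by
      rw [hm0]; linarith
    simp only [hg]
    linarith [hstep, this]
  have hint_f : Integrable (fun ω => (1 + X ω) ^ (-θ')) ℙ := by
    apply Integrable.mono' (integrable_const (1 : ℝ))
    · have heq : (fun ω => (1 + X ω) ^ (-θ')) =
          fun ω => Real.exp (Real.log (1 + X ω) * (-θ')) := by
        funext ω
        exact Real.rpow_def_of_pos (by linarith [hX0 ω]) _
      rw [heq]
      exact (Real.measurable_exp.comp
        ((Real.measurable_log.comp (measurable_const.add hX)).mul_const _)).aestronglyMeasurable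
    · filter_upwards with ω
      rw [Real.norm_eq_abs, abs_of_nonneg (Real.rpow_nonneg (by linarith [hX0 ω]) _)]
      exact Real.rpow_le_one_of_one_le_of_nonpos (by linarith [hX0 ω]) (by linarith)
  have hint_ind : ∀ k ∈ Icc 1 N,
      Integrable (fun ω => Set.indicator (A k) (fun _ => b ((k : ℝ) - 1) - b k) ω) ℙ :=
    fun k _ => (integrable_const _).indicator (hAmeas k)
  have hint_g : Integrable g ℙ := by
    apply (integrable_const (b N)).add
    exact integrable_finset_sum _ hint_ind
  have hmain : ∫ ω, (1 + X ω) ^ (-θ') ∂ℙ ≤ ∫ ω, g ω ∂ℙ :=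
    integral_mono hint_f hint_g hle
  have hgval : ∫ ω, g ω ∂ℙ =
      b N + ∑ k ∈ Icc 1 N, (b ((k : ℝ) - 1) - b k) * (ℙ (A k)).toReal := by
    simp only [hg]
    rw [integral_add (integrable_const _) (integrable_finset_sum _ hint_ind),
      integral_const, probReal_univ, one_smul,
      integral_finset_sum _ hint_ind]
    congr 1
    apply Finset.sum_congr rfl
    intro k _
    rw [integral_indicator_const _ (hAmeas k), smul_eq_mul, mul_comm]; rfl
  calc ∫ ω, (1 + X ω) ^ (-θ') ∂ℙ ≤ ∫ ω, g ω ∂ℙ := hmain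
    _ = b N + ∑ k ∈ Icc 1 N, (b ((k : ℝ) - 1) - b k) * (ℙ (A k)).toReal := hgval
    _ = (1 + δ * N) ^ (-θ') + ∑ k ∈ Icc 1 N,
          ((1 + ((k : ℝ) - 1) * δ) ^ (-θ') - (1 + (k : ℝ) * δ) ^ (-θ'))
            * (ℙ {ω | X ω ≤ (k : ℝ) * δ}).toReal := by
        simp only [hb, hA]
        rw [mul_comm δ (N : ℝ)]

/-- Theorem 1 of the paper, first part. For independent nonnegative
SNRs `γ(s), …, γ(t-1)`, `η > 0`, `θ ≥ 0`, `δ > 0`, and the cumulative service process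
`S(s,t) = η ∑_{k=s}^{t-1} ln(1+γ(k))`, we have
`E[e^{-θ S(s,t)}] = ∏_{k=s}^{t-1} E[(1+γ(k))^{-ηθ}] ≤ ∏_{k=s}^{t-1} U_{δ,γ(k)}(ηθ)`. -/
theorem service_MGF_eq_prod_and_le_Ubound
    {Ω : Type*} [MeasureSpace Ω] [IsProbabilityMeasure (ℙ : Measure Ω)]
    (γ : ℕ → Ω → ℝ) (hmeas : ∀ k, Measurable (γ k)) (hnonneg : ∀ k ω, 0 ≤ γ k ω)
    (s t : ℕ) (hst : s ≤ t)
    (hindep : iIndepFun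
      (fun k : (Ico s t : Finset ℕ) => γ (k : ℕ)) ℙ)
    (η θ δ : ℝ) (hη : 0 < η) (hθ : 0 ≤ θ) (hδ : 0 < δ) :
    (∫ ω : Ω, Real.exp (-θ * (η * ∑ k ∈ Ico s t, Real.log (1 + γ k ω))) ∂ℙ =
        ∏ k ∈ Ico s t, ∫ ω : Ω, (1 + γ k ω) ^ (-(η * θ)) ∂ℙ) ∧
      (∏ k ∈ Ico s t, ∫ ω : Ω, (1 + γ k ω) ^ (-(η * θ)) ∂ℙ) ≤
        ∏ k ∈ Ico s t, Ubound (fun x => (ℙ {ω : Ω | γ k ω ≤ x}).toReal) δ (η * θ) := by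
  constructor
  · -- the MGF equality
    set Y : ↥(Ico s t) → Ω → ℝ :=
      fun k ω => Real.log (1 + γ (k : ℕ) ω) with hY
    have hYmeas : ∀ k, Measurable (Y k) := fun k =>
      Real.measurable_log.comp (measurable_const.add (hmeas _))
    have hYindep : iIndepFun Y ℙ :=
      hindep.comp (fun _ => fun x => Real.log (1 + x))
        (fun _ => Real.measurable_log.comp (measurable_const.add measurable_id))
    have hmgf := hYindep.mgf_sum hYmeas Finset.univ (t := -(η * θ))
    have hLHS : (∫ ω : Ω, Real.exp (-θ * (η * ∑ k ∈ Ico s t, Real.log (1 + γ k ω))) ∂ℙ)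
        = mgf (∑ k ∈ Finset.univ, Y k) ℙ (-(η * θ)) := by
      unfold mgf
      congr 1
      funext ω
      congr 1
      rw [Finset.univ_eq_attach]
      have : (∑ k ∈ (Ico s t).attach, Y k) ω
          = ∑ k ∈ (Ico s t).attach, Real.log (1 + γ (k : ℕ) ω) := by
        simp [hY]
      rw [this, Finset.sum_attach (Ico s t) (fun k => Real.log (1 + γ k ω))]
      ring
    have hRHS : ∀ k : ↥(Ico s t),
        mgf (Y k) ℙ (-(η * θ)) = ∫ ω : Ω, (1 + γ (k : ℕ) ω) ^ (-(η * θ)) ∂ℙ := by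
      intro k
      unfold mgf
      congr 1
      funext ω
      rw [Real.rpow_def_of_pos (by linarith [hnonneg (k : ℕ) ω])]
      ring_nf
      rfl
    rw [hLHS, hmgf, Finset.univ_eq_attach]
    rw [← Finset.prod_attach (Ico s t) (fun k => ∫ ω : Ω, (1 + γ k ω) ^ (-(η * θ)) ∂ℙ)]
    exact Finset.prod_congr rfl fun k _ => hRHS k
  · apply Finset.prod_le_prod
    · intro k _
      exact integral_nonneg fun ω => Real.rpow_nonneg (by linarith [hnonneg k ω]) _
    · intro k _
      exact integral_rpow_le_Ubound (γ k) (hmeas k) (hnonneg k) (η * θ) δ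
        (by positivity) hδ
end

section
/- Let γ(s), γ(s+1), …, γ(t−1) be independent and identically distributed nonnegative random variables with common distribution that of a nonnegative random variable γ, let η > 0, θ ≥ 0 and δ > 0, and let S(s,t) = η·Σ_{k=s}^{t−1} ln(1+γ(k)). Then E[e^{−θ·S(s,t)}] ≤ (q(θ))^{t−s}, where q(θ) = U_{δ,γ}(ηθ). -/
open MeasureTheory ProbabilityTheory Finset

namespace ServiceMGF

/-- The auxiliary function `φ x = exp(-θ' log(1+x))`, equal to `(1+x)^(-θ')` for `x > -1`. -/
noncomputable def phi (θ' x : ℝ) : ℝ := Real.exp (-θ' * Real.log (1 + x))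

lemma phi_eq_rpow {θ' x : ℝ} (hx : 0 ≤ x) : phi θ' x = (1 + x) ^ (-θ') := by
  rw [Real.rpow_def_of_pos (by linarith), phi, mul_comm]

lemma phi_measurable (θ' : ℝ) : Measurable (phi θ') :=
  Real.measurable_exp.comp ((Real.measurable_log.comp (measurable_const.add measurable_id)).const_mul (-θ'))

lemma phi_nonneg (θ' x : ℝ) : 0 ≤ phi θ' x := (Real.exp_pos _).le

lemma phi_le_one {θ' x : ℝ} (hθ' : 0 ≤ θ') (hx : 0 ≤ x) : phi θ' x ≤ 1 := by
  rw [phi, Real.exp_le_one_iff]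
  have h1 : 0 ≤ Real.log (1 + x) := Real.log_nonneg (by linarith)
  nlinarith

lemma phi_antitone {θ' x y : ℝ} (hθ' : 0 ≤ θ') (hx : -1 < x) (hxy : x ≤ y) :
    phi θ' y ≤ phi θ' x := by
  rw [phi, phi, Real.exp_le_exp]
  have := Real.log_le_log (by linarith : (0:ℝ) < 1 + x) (by linarith : 1 + x ≤ 1 + y)
  nlinarith

/-- The pointwise step-function bound. -/
lemma step_bound {θ' δ : ℝ} (hθ' : 0 ≤ θ') (hδ : 0 < δ) {x : ℝ} (hx : 0 ≤ x) (N : ℕ) :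
    phi θ' x ≤ (1 + δ * N) ^ (-θ') +
      ∑ k ∈ Icc 1 N,
        ((1 + ((k : ℝ) - 1) * δ) ^ (-θ') - (1 + (k : ℝ) * δ) ^ (-θ'))
          * (if x ≤ (k : ℝ) * δ then (1:ℝ) else 0) := by
  induction N with
  | zero =>
      simp only [Nat.cast_zero, mul_zero, add_zero, Icc_self, Icc_eq_empty_of_lt,
        Nat.lt_one_iff]
      rw [Finset.sum_empty, add_zero, Real.one_rpow]
      exact phi_le_one hθ' hx
  | succ N ih =>
      rw [Finset.sum_Icc_succ_top (by omega : 1 ≤ N + 1)]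
      by_cases h : x ≤ ((N : ℝ) + 1) * δ
      · have hif : (if x ≤ ((N+1 : ℕ) : ℝ) * δ then (1:ℝ) else 0) = 1 := by
          rw [if_pos]; push_cast; linarith
        rw [hif]
        have e1 : (1:ℝ) + δ * ((N+1 : ℕ) : ℝ) = 1 + (((N+1:ℕ)):ℝ) * δ := by ring
        have e2 : (1:ℝ) + (((N+1:ℕ):ℝ) - 1) * δ = 1 + δ * (N:ℝ) := by push_cast; ring
        rw [e1, e2, mul_one]
        linarith [ih]
      · push_neg at h
        have hzero : ∑ k ∈ Icc 1 N,
            ((1 + ((k : ℝ) - 1) * δ) ^ (-θ') - (1 + (k : ℝ) * δ) ^ (-θ'))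
              * (if x ≤ (k : ℝ) * δ then (1:ℝ) else 0) = 0 := by
          apply Finset.sum_eq_zero
          intro k hk
          rw [if_neg, mul_zero]
          push_neg
          have hkN : (k : ℝ) ≤ N := by
            exact_mod_cast (Finset.mem_Icc.mp hk).2
          calc (k:ℝ) * δ ≤ ((N:ℝ)+1) * δ := by nlinarith
            _ < x := h
        have hif : (if x ≤ ((N+1 : ℕ) : ℝ) * δ then (1:ℝ) else 0) = 0 := by
          rw [if_neg]; push_neg; push_cast; linarith
        rw [hzero, hif, mul_zero, add_zero, add_zero]
        have hb : (0:ℝ) ≤ δ * ((N:ℕ)+1 : ℕ) := by positivity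
        have : phi θ' x ≤ phi θ' (δ * ((N+1:ℕ):ℝ)) := by
          apply phi_antitone hθ' (by push_cast; nlinarith)
          push_cast; nlinarith
        calc phi θ' x ≤ phi θ' (δ * ((N+1:ℕ):ℝ)) := this
          _ = (1 + δ * ((N+1:ℕ):ℝ)) ^ (-θ') := phi_eq_rpow (by positivity)

variable {Ω : Type*} [MeasureSpace Ω] [IsProbabilityMeasure (ℙ : Measure Ω)]

lemma integrable_of_bdd {g : Ω → ℝ} (hm : Measurable g) (h0 : ∀ ω, 0 ≤ g ω)
    (h1 : ∀ ω, g ω ≤ 1) : Integrable g ℙ :=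
  (integrable_const (1:ℝ)).mono' hm.aestronglyMeasurable
    (ae_of_all _ fun ω => by rw [Real.norm_eq_abs, abs_of_nonneg (h0 ω)]; exact h1 ω)

lemma integral_prod_eq {ι : Type*} (f : ι → Ω → ℝ) (hm : ∀ i, Measurable (f i))
    (h0 : ∀ i ω, 0 ≤ f i ω) (h1 : ∀ i ω, f i ω ≤ 1)
    (hidp : iIndepFun f ℙ) (u : Finset ι) :
    ∫ ω, ∏ i ∈ u, f i ω ∂ℙ = ∏ i ∈ u, ∫ ω, f i ω ∂ℙ := by
  classical
  induction u using Finset.induction with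
  | empty => simp
  | insert _ _ ha =>
      rename_i a u ih
      simp only [Finset.prod_insert ha]
      rw [← ih]
      have hprod_m : Measurable (fun ω => ∏ i ∈ u, f i ω) :=
        Finset.measurable_prod u (fun i _ => hm i)
      have hindep2 : IndepFun (∏ j ∈ u, f j) (f a) ℙ :=
        hidp.indepFun_finsetProd_of_notMem hm ha
      have hint1 : Integrable (f a) ℙ := integrable_of_bdd (hm a) (h0 a) (h1 a)
      have hint2 : Integrable (fun ω => ∏ i ∈ u, f i ω) ℙ :=
        integrable_of_bdd hprod_m (fun ω => Finset.prod_nonneg fun i _ => h0 i ω)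
          (fun ω => Finset.prod_le_one (fun i _ => h0 i ω) (fun i _ => h1 i ω))
      have heq : (fun ω => ∏ i ∈ u, f i ω) = ∏ j ∈ u, f j := by
        ext ω; rw [Finset.prod_apply]
      have hmul := hindep2.integral_mul_eq_mul_integral (heq ▸ hint2).aestronglyMeasurable hint1.aestronglyMeasurable
      have hgoal : (fun ω => f a ω * ∏ i ∈ u, f i ω)
          = (∏ j ∈ u, f j) * f a := by
        ext ω; rw [Pi.mul_apply, Finset.prod_apply]; ring
      calc ∫ ω, f a ω * ∏ i ∈ u, f i ω ∂ℙ
          = integral ℙ ((∏ j ∈ u, f j) * f a) := by rw [← hgoal]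
        _ = integral ℙ (∏ j ∈ u, f j) * integral ℙ (f a) := hmul
        _ = (∫ ω, f a ω ∂ℙ) * ∫ ω, ∏ i ∈ u, f i ω ∂ℙ := by
            rw [← heq]; exact mul_comm _ _

lemma integral_if_le (γ₀ : Ω → ℝ) (hmeas₀ : Measurable γ₀) (c : ℝ) :
    ∫ ω, (if γ₀ ω ≤ c then (1:ℝ) else 0) ∂ℙ = (ℙ {ω : Ω | γ₀ ω ≤ c}).toReal := by
  have hset : MeasurableSet {ω : Ω | γ₀ ω ≤ c} := hmeas₀ measurableSet_Iic
  have : (fun ω => if γ₀ ω ≤ c then (1:ℝ) else 0)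
      = Set.indicator {ω : Ω | γ₀ ω ≤ c} (fun _ => (1:ℝ)) := by
    ext ω; simp [Set.indicator_apply, Set.mem_setOf_eq]
  rw [this, integral_indicator_const _ hset]; simp; rfl

lemma integrable_if (γ₀ : Ω → ℝ) (hmeas₀ : Measurable γ₀) (c : ℝ) :
    Integrable (fun ω => if γ₀ ω ≤ c then (1:ℝ) else 0) ℙ := by
  have hset : MeasurableSet {ω : Ω | γ₀ ω ≤ c} := hmeas₀ measurableSet_Iic
  have : (fun ω => if γ₀ ω ≤ c then (1:ℝ) else 0)
      = Set.indicator {ω : Ω | γ₀ ω ≤ c} (fun _ => (1:ℝ)) := by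
    ext ω; simp [Set.indicator_apply, Set.mem_setOf_eq]
  rw [this]
  exact (integrable_const (1:ℝ)).indicator hset

lemma integral_phi_le {θ' δ : ℝ} (hθ' : 0 ≤ θ') (hδ : 0 < δ)
    (γ₀ : Ω → ℝ) (hmeas₀ : Measurable γ₀) (hnonneg₀ : ∀ ω, 0 ≤ γ₀ ω) (N : ℕ) :
    ∫ ω, phi θ' (γ₀ ω) ∂ℙ ≤ (1 + δ * N) ^ (-θ') +
      ∑ k ∈ Icc 1 N,
        ((1 + ((k : ℝ) - 1) * δ) ^ (-θ') - (1 + (k : ℝ) * δ) ^ (-θ'))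
          * (ℙ {ω : Ω | γ₀ ω ≤ (k : ℝ) * δ}).toReal := by
  have hint_f : Integrable (fun ω => phi θ' (γ₀ ω)) ℙ :=
    integrable_of_bdd ((phi_measurable θ').comp hmeas₀) (fun ω => phi_nonneg _ _)
      (fun ω => phi_le_one hθ' (hnonneg₀ ω))
  have hint_g : Integrable (fun ω => (1 + δ * N) ^ (-θ') +
      ∑ k ∈ Icc 1 N,
        ((1 + ((k : ℝ) - 1) * δ) ^ (-θ') - (1 + (k : ℝ) * δ) ^ (-θ'))
          * (if γ₀ ω ≤ (k : ℝ) * δ then (1:ℝ) else 0)) ℙ := by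
    apply (integrable_const _).add
    apply integrable_finset_sum
    intro k _
    exact (integrable_if γ₀ hmeas₀ _).const_mul _
  calc ∫ ω, phi θ' (γ₀ ω) ∂ℙ
      ≤ ∫ ω, ((1 + δ * N) ^ (-θ') +
          ∑ k ∈ Icc 1 N,
            ((1 + ((k : ℝ) - 1) * δ) ^ (-θ') - (1 + (k : ℝ) * δ) ^ (-θ'))
              * (if γ₀ ω ≤ (k : ℝ) * δ then (1:ℝ) else 0)) ∂ℙ := by
        apply integral_mono hint_f hint_g
        intro ω
        exact step_bound hθ' hδ (hnonneg₀ ω) N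
    _ = (1 + δ * N) ^ (-θ') +
        ∑ k ∈ Icc 1 N,
          ((1 + ((k : ℝ) - 1) * δ) ^ (-θ') - (1 + (k : ℝ) * δ) ^ (-θ'))
            * (ℙ {ω : Ω | γ₀ ω ≤ (k : ℝ) * δ}).toReal := by
        rw [integral_add (integrable_const _) (by
          apply integrable_finset_sum
          intro k _
          exact (integrable_if γ₀ hmeas₀ _).const_mul _)]
        rw [integral_const]
        simp only [probReal_univ, one_smul]
        congr 1
        rw [integral_finset_sum _ (fun k _ => (integrable_if γ₀ hmeas₀ _).const_mul _)]
        apply Finset.sum_congr rfl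
        intro k _
        rw [integral_const_mul, integral_if_le γ₀ hmeas₀]

end ServiceMGF

/-- Theorem 1 of the paper, second part: the i.i.d. case. For i.i.d.
nonnegative SNRs `γ(s), …, γ(t-1)` with common distribution that of `γ₀`, `η > 0`,
`θ ≥ 0`, `δ > 0`, and `S(s,t) = η ∑_{k=s}^{t-1} ln(1+γ(k))`,
`E[e^{-θ S(s,t)}] ≤ (q(θ))^{t-s}`, where `q(θ) = U_{δ,γ₀}(ηθ)`. -/
theorem service_MGF_le_pow_iid
    {Ω : Type*} [MeasureSpace Ω] [IsProbabilityMeasure (ℙ : Measure Ω)]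
    (γ : ℕ → Ω → ℝ) (hmeas : ∀ k, Measurable (γ k)) (hnonneg : ∀ k ω, 0 ≤ γ k ω)
    (γ₀ : Ω → ℝ) (hmeas₀ : Measurable γ₀) (hnonneg₀ : ∀ ω, 0 ≤ γ₀ ω)
    (s t : ℕ) (hst : s ≤ t)
    (hindep : iIndepFun
      (fun k : (Ico s t : Finset ℕ) => γ (k : ℕ)) ℙ)
    (hident : ∀ k ∈ Ico s t, IdentDistrib (γ k) γ₀ ℙ ℙ)
    (η θ δ : ℝ) (hη : 0 < η) (hθ : 0 ≤ θ) (hδ : 0 < δ) :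
    ∫ ω : Ω, Real.exp (-θ * (η * ∑ k ∈ Ico s t, Real.log (1 + γ k ω))) ∂ℙ ≤
      (Ubound (fun x => (ℙ {ω : Ω | γ₀ ω ≤ x}).toReal) δ (η * θ)) ^ (t - s) := by
  classical
  set θ' := η * θ with hθ'def
  have hθ'0 : 0 ≤ θ' := mul_nonneg hη.le hθ
  have hpt : ∀ ω, Real.exp (-θ * (η * ∑ k ∈ Ico s t, Real.log (1 + γ k ω)))
      = ∏ i : (Ico s t : Finset ℕ), ServiceMGF.phi θ' (γ (i : ℕ) ω) := by
    intro ω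
    rw [show -θ * (η * ∑ k ∈ Ico s t, Real.log (1 + γ k ω))
        = ∑ k ∈ Ico s t, -θ' * Real.log (1 + γ k ω) by
          rw [← Finset.mul_sum]; ring]
    rw [Real.exp_sum, Finset.prod_coe_sort (Ico s t) (fun k => ServiceMGF.phi θ' (γ k ω))]
    exact Finset.prod_congr rfl fun k _ => rfl
  have hind2 : iIndepFun
      (fun i : (Ico s t : Finset ℕ) => fun ω => ServiceMGF.phi θ' (γ (i : ℕ) ω)) ℙ :=
    hindep.comp (fun _ => ServiceMGF.phi θ') (fun _ => ServiceMGF.phi_measurable θ')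
  have h3 := ServiceMGF.integral_prod_eq (fun i : (Ico s t : Finset ℕ) => fun ω => ServiceMGF.phi θ' (γ (i : ℕ) ω))
    (fun i => (ServiceMGF.phi_measurable θ').comp (hmeas _)) (fun i ω => ServiceMGF.phi_nonneg _ _)
    (fun i ω => ServiceMGF.phi_le_one hθ'0 (hnonneg _ ω)) hind2 Finset.univ
  set E := ∫ ω, ServiceMGF.phi θ' (γ₀ ω) ∂ℙ with hEdef
  have h4 : ∀ i : (Ico s t : Finset ℕ), ∫ ω, ServiceMGF.phi θ' (γ (i : ℕ) ω) ∂ℙ = E := fun i =>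
    ((hident i i.2).comp (ServiceMGF.phi_measurable θ')).integral_eq
  have hcard : Fintype.card (Ico s t : Finset ℕ) = t - s := by
    simp [Fintype.card_coe, Nat.card_Ico]
  have hE0 : 0 ≤ E := integral_nonneg fun ω => ServiceMGF.phi_nonneg _ _
  have hEle : E ≤ Ubound (fun x => (ℙ {ω : Ω | γ₀ ω ≤ x}).toReal) δ θ' := by
    apply le_ciInf
    intro N
    exact ServiceMGF.integral_phi_le hθ'0 hδ γ₀ hmeas₀ hnonneg₀ N
  calc ∫ ω : Ω, Real.exp (-θ * (η * ∑ k ∈ Ico s t, Real.log (1 + γ k ω))) ∂ℙ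
      = ∫ ω, ∏ i : (Ico s t : Finset ℕ), ServiceMGF.phi θ' (γ (i : ℕ) ω) ∂ℙ := by
        exact integral_congr_ae (Filter.Eventually.of_forall hpt)
    _ = ∏ i : (Ico s t : Finset ℕ), ∫ ω, ServiceMGF.phi θ' (γ (i : ℕ) ω) ∂ℙ := h3
    _ = E ^ (t - s) := by
        rw [Finset.prod_congr rfl (fun i _ => h4 i), Finset.prod_const, Finset.card_univ, hcard]
    _ ≤ (Ubound (fun x => (ℙ {ω : Ω | γ₀ ω ≤ x}).toReal) δ θ') ^ (t - s) :=
        pow_le_pow_left₀ hE0 hEle _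
end
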